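/- arXiv:2410.05140 — 2 statements merged into one kernel-verified Lean document; each statement's English description precedes it below -/
import Mathlib

section
/- Let T be a positive integer and let a_1, a_2, …, a_T be nonnegative real numbers with a_1 ≥ 1. Then ∑_{l=1}^{T} a_l / (∑_{i=1}^{l} a_i) ≤ log(∑_{l=1}^{T} a_l) + 1, where log denotes the natural logarithm. -/
/-- Lemma 3.2 of Ward et al., as used in the paper.
For a positive integer `T` and nonnegative reals `a 1, …, a T` with `a 1 ≥ 1`,
`∑_{l=1}^{T} a l / (∑_{i=1}^{l} a i) ≤ log (∑_{l=1}^{T} a l) + 1`. -/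
theorem sum_div_cumsum_le_log_add_one (T : ℕ) (hT : 1 ≤ T) (a : ℕ → ℝ)
    (ha : ∀ l, 1 ≤ l → l ≤ T → 0 ≤ a l) (ha1 : 1 ≤ a 1) :
    ∑ l ∈ Finset.Icc 1 T, a l / (∑ i ∈ Finset.Icc 1 l, a i)
      ≤ Real.log (∑ l ∈ Finset.Icc 1 T, a l) + 1 := by
  induction T, hT using Nat.le_induction with
  | base =>
    simp only [Finset.Icc_self, Finset.sum_singleton]
    have h1 : (0:ℝ) < a 1 := lt_of_lt_of_le one_pos ha1
    rw [div_self h1.ne']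
    have : 0 ≤ Real.log (a 1) := Real.log_nonneg ha1
    linarith
  | succ n hn ih =>
    have ha' : ∀ l, 1 ≤ l → l ≤ n → 0 ≤ a l :=
      fun l h1 h2 => ha l h1 (h2.trans (Nat.le_succ n))
    have IH := ih ha'
    have hS : (1:ℝ) ≤ ∑ i ∈ Finset.Icc 1 n, a i := by
      calc (1:ℝ) ≤ a 1 := ha1
        _ ≤ ∑ i ∈ Finset.Icc 1 n, a i :=
          Finset.single_le_sum
            (fun i hi => ha' i (Finset.mem_Icc.mp hi).1 (Finset.mem_Icc.mp hi).2)
            (Finset.mem_Icc.mpr ⟨le_rfl, hn⟩)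
    set S := ∑ i ∈ Finset.Icc 1 n, a i with hSdef
    have hSpos : (0:ℝ) < S := lt_of_lt_of_le one_pos hS
    have han1 : 0 ≤ a (n+1) := ha (n+1) (by omega) le_rfl
    have hpos : 0 < S + a (n+1) := by linarith
    have hsum_succ : ∑ i ∈ Finset.Icc 1 (n+1), a i = S + a (n+1) := by
      rw [Finset.sum_Icc_succ_top (by omega)]
    rw [Finset.sum_Icc_succ_top (show 1 ≤ n + 1 by omega), hsum_succ]
    have key : a (n+1) / (S + a (n+1)) ≤ Real.log (S + a (n+1)) - Real.log S := by
      have h := Real.log_le_sub_one_of_pos (show (0:ℝ) < S / (S + a (n+1)) by positivity)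
      rw [Real.log_div hSpos.ne' hpos.ne'] at h
      have heq : a (n+1) / (S + a (n+1)) = 1 - S / (S + a (n+1)) := by field_simp; ring
      linarith
    linarith [IH]
end

section
/- For all x₁, x₂ ∈ ℝ^{d_x}, ‖y*(x₁) − y*(x₂)‖ ≤ (C_{g_{xy}}/μ)·‖x₁ − x₂‖; that is, the lower-level solution map y* is Lipschitz continuous with constant L_y := C_{g_{xy}}/μ. -/
noncomputable section

open scoped RealInnerProductSpace

variable {dx dy : ℕ}

/-- Partial gradient of a bivariate function with respect to its second argument. -/
def gY (f : EuclideanSpace ℝ (Fin dx) → EuclideanSpace ℝ (Fin dy) → ℝ)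
    (x : EuclideanSpace ℝ (Fin dx)) (y : EuclideanSpace ℝ (Fin dy)) :
    EuclideanSpace ℝ (Fin dy) :=
  gradient (fun y' => f x y') y

/-- Mixed second derivative `∇_x∇_y g (x,y)`, as a linear map `ℝ^{d_y} → ℝ^{d_x}`. -/
def gXY (g : EuclideanSpace ℝ (Fin dx) → EuclideanSpace ℝ (Fin dy) → ℝ)
    (x : EuclideanSpace ℝ (Fin dx)) (y : EuclideanSpace ℝ (Fin dy)) :
    EuclideanSpace ℝ (Fin dy) →L[ℝ] EuclideanSpace ℝ (Fin dx) :=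
  ContinuousLinearMap.adjoint (fderiv ℝ (fun x' => gY g x' y) x)

/-- First-order condition for a convex function on `univ`. -/
lemma convex_firstOrder {E : Type*} [NormedAddCommGroup E] [NormedSpace ℝ E]
    {φ : E → ℝ} (hφ : ConvexOn ℝ Set.univ φ) {y z : E} {φ' : E →L[ℝ] ℝ}
    (hd : HasFDerivAt φ φ' y) : φ' (z - y) ≤ φ z - φ y := by
  have hline : ConvexOn ℝ Set.univ (fun t : ℝ => φ (t • (z - y) + y)) := by
    have h := hφ.comp_affineMap
      (AffineMap.mk (fun t : ℝ => t • (z - y) + y)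
        { toFun := fun t : ℝ => t • (z - y)
          map_add' := by intro a b; simp [add_smul]
          map_smul' := by intro a b; simp [smul_smul] }
        (by intro p v; simp [add_smul, add_assoc]))
    simpa [Function.comp_def] using h
  have hderiv : HasDerivAt (fun t : ℝ => φ (t • (z - y) + y)) (φ' (z - y)) 0 := by
    have h1 : HasDerivAt (fun t : ℝ => t • (z - y) + y) (z - y) 0 := by
      simpa using ((hasDerivAt_id (0 : ℝ)).smul_const (z - y)).add_const y
    have hd' : HasFDerivAt φ φ' ((0:ℝ) • (z - y) + y) := by simpa using hd
    have h2 := hd'.comp_hasDerivAt (x := (0:ℝ)) h1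
    simpa [Function.comp_def] using h2
  have := hline.le_slope_of_hasDerivAt (Set.mem_univ (0:ℝ)) (Set.mem_univ (1:ℝ))
    one_pos hderiv
  simpa [slope_def_field] using this

/-- First-order condition for a strongly convex differentiable function. -/
lemma strongConvex_firstOrder {E : Type*} [NormedAddCommGroup E] [InnerProductSpace ℝ E] [CompleteSpace E]
    {f : E → ℝ} {μ : ℝ} (hf : Differentiable ℝ f)
    (hsc : StrongConvexOn Set.univ μ f) (y z : E) :
    f y + ⟪gradient f y, z - y⟫ + μ / 2 * ‖z - y‖ ^ 2 ≤ f z := by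
  have hφ : ConvexOn ℝ Set.univ fun w => f w - μ / 2 * ‖w‖ ^ 2 :=
    strongConvexOn_iff_convex.mp hsc
  -- derivative of ‖·‖²
  have hn : HasFDerivAt (fun w : E => ‖w‖ ^ 2)
      ((fderivInnerCLM ℝ (y, y)).comp
        ((ContinuousLinearMap.id ℝ E).prod (ContinuousLinearMap.id ℝ E))) y := by
    have := (hasFDerivAt_id y).inner ℝ (hasFDerivAt_id y)
    have heq : (fun w : E => ‖w‖ ^ 2) = fun w : E => ⟪w, w⟫ := by
      funext w; rw [real_inner_self_eq_norm_sq]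
    rw [heq]
    simpa using this
  have hd : HasFDerivAt (fun w => f w - μ / 2 * ‖w‖ ^ 2)
      (fderiv ℝ f y - (μ / 2) • ((fderivInnerCLM ℝ (y, y)).comp
        ((ContinuousLinearMap.id ℝ E).prod (ContinuousLinearMap.id ℝ E)))) y :=
    (hf y).hasFDerivAt.sub (hn.const_smul (μ / 2))
  have key := convex_firstOrder hφ (z := z) hd
  have hgrad : ⟪gradient f y, z - y⟫ = fderiv ℝ f y (z - y) := by
    simp [gradient, InnerProductSpace.toDual_symm_apply]
  simp only [ContinuousLinearMap.sub_apply, ContinuousLinearMap.smul_apply,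
    ContinuousLinearMap.comp_apply, ContinuousLinearMap.prod_apply,
    ContinuousLinearMap.id_apply, fderivInnerCLM_apply, smul_eq_mul] at key
  rw [hgrad]
  have e1 : ⟪y, z - y⟫ = ⟪y, z⟫ - ‖y‖ ^ 2 := by
    rw [inner_sub_right, real_inner_self_eq_norm_sq]
  have e2 : ⟪z - y, y⟫ = ⟪y, z⟫ - ‖y‖ ^ 2 := by
    rw [inner_sub_left, real_inner_self_eq_norm_sq, real_inner_comm]
  have e3 : ‖z - y‖ ^ 2 = ‖z‖ ^ 2 - 2 * ⟪y, z⟫ + ‖y‖ ^ 2 := by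
    rw [norm_sub_sq_real, real_inner_comm]
  rw [e1, e2] at key
  rw [e3]
  linarith [key]

/-- the lower-level solution map `y*` is Lipschitz with constant
`L_y := C_{g_{xy}} / μ`. -/
theorem ystar_lipschitz
    (g : EuclideanSpace ℝ (Fin dx) → EuclideanSpace ℝ (Fin dy) → ℝ)
    (hg : ContDiff ℝ 2 (Function.uncurry g))
    (μ Cgxy : ℝ) (hμ : 0 < μ)
    (hsc : ∀ x, StrongConvexOn Set.univ μ (fun y => g x y))
    (hgxy : ∀ x y, ‖gXY g x y‖ ≤ Cgxy)
    (ystar : EuclideanSpace ℝ (Fin dx) → EuclideanSpace ℝ (Fin dy))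
    (hystar : ∀ x y, g x (ystar x) ≤ g x y) :
    ∀ x₁ x₂, ‖ystar x₁ - ystar x₂‖ ≤ (Cgxy / μ) * ‖x₁ - x₂‖ := by
  have hCnn : 0 ≤ Cgxy := le_trans (norm_nonneg _) (hgxy 0 0)
  intro x₁ x₂
  set y₁ := ystar x₁ with hy₁
  set y₂ := ystar x₂ with hy₂
  have hfy : ∀ x, ContDiff ℝ 2 (fun y => g x y) := fun x =>
    by
      have h := hg.comp (ContDiff.prodMk (contDiff_const (c := x))
        (contDiff_id (𝕜 := ℝ) (E := EuclideanSpace ℝ (Fin dy))))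
      exact h
  have hdiffy : ∀ x, Differentiable ℝ (fun y => g x y) := fun x =>
    (hfy x).differentiable (by norm_num)
  have hgrad0 : ∀ x, gY g x (ystar x) = 0 := by
    intro x
    have hmin : IsLocalMin (fun y => g x y) (ystar x) :=
      Filter.Eventually.of_forall (fun y => hystar x y)
    have h0 := hmin.fderiv_eq_zero
    simp [gY, gradient, h0]
  -- strong monotonicity at x₂
  have hmono : μ * ‖y₁ - y₂‖ ^ 2 ≤ ⟪gY g x₂ y₁, y₁ - y₂⟫ := by
    have h1 := strongConvex_firstOrder (hdiffy x₂) (hsc x₂) y₁ y₂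
    have h2 := strongConvex_firstOrder (hdiffy x₂) (hsc x₂) y₂ y₁
    have h0 : gradient (fun y => g x₂ y) y₂ = 0 := hgrad0 x₂
    rw [h0] at h2
    simp only [inner_zero_left, add_zero, zero_add] at h2
    have hrev : ‖y₂ - y₁‖ = ‖y₁ - y₂‖ := norm_sub_rev _ _
    have hin : (⟪gradient (fun y => g x₂ y) y₁, y₂ - y₁⟫ : ℝ)
        = -⟪gY g x₂ y₁, y₁ - y₂⟫ := by
      rw [show y₂ - y₁ = -(y₁ - y₂) by abel, inner_neg_right]; rfl
    rw [hin, hrev] at h1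
    linarith
  -- Lipschitz continuity of x ↦ gY g x y₁
  have hgyC : ContDiff ℝ 1 (fun x => fderiv ℝ (fun y' => g x y') y₁) :=
    hg.fderiv (g := fun _ : EuclideanSpace ℝ (Fin dx) => y₁) contDiff_const (by norm_num)
  have hgy : ContDiff ℝ 1 (fun x => gY g x y₁) := by
    have heq : (fun x => gY g x y₁) = fun x =>
        (InnerProductSpace.toDual ℝ (EuclideanSpace ℝ (Fin dy))).symm
          (fderiv ℝ (fun y' => g x y') y₁) := rfl
    rw [heq]
    exact (InnerProductSpace.toDual ℝ
      (EuclideanSpace ℝ (Fin dy))).symm.contDiff.comp hgyC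
  have hdiffx : ∀ x, DifferentiableAt ℝ (fun x' => gY g x' y₁) x := fun x =>
    (hgy.differentiable (by norm_num)) x
  have hbound : ∀ x ∈ Set.univ, ‖fderiv ℝ (fun x' => gY g x' y₁) x‖ ≤ Cgxy := by
    intro x _
    have h := hgxy x y₁
    rw [gXY, LinearIsometryEquiv.norm_map] at h
    exact h
  have hlip : ‖gY g x₂ y₁ - gY g x₁ y₁‖ ≤ Cgxy * ‖x₂ - x₁‖ :=
    convex_univ.norm_image_sub_le_of_norm_fderiv_le (fun x _ => hdiffx x) hbound
      (Set.mem_univ x₁) (Set.mem_univ x₂)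
  have hfinal : μ * ‖y₁ - y₂‖ ^ 2 ≤ Cgxy * ‖x₂ - x₁‖ * ‖y₁ - y₂‖ := by
    calc μ * ‖y₁ - y₂‖ ^ 2 ≤ ⟪gY g x₂ y₁, y₁ - y₂⟫ := hmono
      _ = ⟪gY g x₂ y₁ - gY g x₁ y₁, y₁ - y₂⟫ := by rw [hgrad0 x₁, sub_zero]
      _ ≤ ‖gY g x₂ y₁ - gY g x₁ y₁‖ * ‖y₁ - y₂‖ := real_inner_le_norm _ _
      _ ≤ Cgxy * ‖x₂ - x₁‖ * ‖y₁ - y₂‖ :=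
          mul_le_mul_of_nonneg_right hlip (norm_nonneg _)
  have hx : ‖x₂ - x₁‖ = ‖x₁ - x₂‖ := norm_sub_rev _ _
  rcases eq_or_lt_of_le (norm_nonneg (y₁ - y₂)) with h0 | hpos
  · rw [← h0]
    positivity
  · rw [div_mul_eq_mul_div, le_div_iff₀ hμ]
    rw [hx] at hfinal
    nlinarith [hfinal, hpos]
end
end
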